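/- (Medoid satisfies (3n−2t)/(n−2t)-MEB validity.) Let n > 2t and v : Fin n → EuclideanSpace ℝ (Fin d). Let H ⊆ Fin n with |H| ≥ n − t and suppose v i ∈ closedBall(C*, r*) for all i ∈ H, where r* ≥ 0. Let i₀ ∈ Fin n minimize ∑_{j ∈ Fin n} ‖v i − v j‖₂ over all i ∈ Fin n (so m = v i₀ is a medoid of the inputs). Then ‖m − C*‖₂ ≤ ((3n−2t)/(n−2t)) · r*. -/
import Mathlib


/-- The medoid satisfies `(3n-2t)/(n-2t)`-MEB validity: if all honest points (an index
set `H` with `|H| ≥ n - t`) lie in `closedBall C* r*` and `i₀` minimizes the sum of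
Euclidean distances to all input points, then `‖v i₀ - C*‖ ≤ ((3n-2t)/(n-2t))·r*`. -/
theorem medoid_meb_validity (d n t : ℕ) (hn : n > 2 * t)
    (v : Fin n → EuclideanSpace ℝ (Fin d))
    (H : Finset (Fin n)) (hH : n - t ≤ H.card)
    (Cstar : EuclideanSpace ℝ (Fin d)) (rstar : ℝ) (hr : 0 ≤ rstar)
    (hball : ∀ i ∈ H, v i ∈ Metric.closedBall Cstar rstar)
    (i₀ : Fin n)
    (hmed : ∀ i : Fin n, ∑ j, ‖v i₀ - v j‖ ≤ ∑ j, ‖v i - v j‖) :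
    ‖v i₀ - Cstar‖ ≤ ((3 * (n : ℝ) - 2 * t) / ((n : ℝ) - 2 * t)) * rstar := by
  simp only [← dist_eq_norm] at hmed ⊢
  have ht_le : t ≤ n := by omega
  obtain ⟨s, hs⟩ : H.Nonempty := Finset.card_pos.mp (by omega)
  set D := dist (v i₀) Cstar with hDdef
  have hD0 : 0 ≤ D := dist_nonneg
  have hsC : dist (v s) Cstar ≤ rstar := Metric.mem_closedBall.mp (hball s hs)
  -- lower bound on honest part of medoid's sum
  have key1 : H.card • (D - rstar) ≤ ∑ j ∈ H, dist (v i₀) (v j) := by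
    refine Finset.card_nsmul_le_sum H _ _ (fun j hj => ?_)
    have h1 : dist (v j) Cstar ≤ rstar := Metric.mem_closedBall.mp (hball j hj)
    have h2 := dist_triangle (v i₀) (v j) Cstar
    simp only [hDdef]; linarith
  -- upper bound on honest part of s's sum
  have key2 : ∑ j ∈ H, dist (v s) (v j) ≤ H.card • (2 * rstar) := by
    refine Finset.sum_le_card_nsmul H _ _ (fun j hj => ?_)
    have h1 : dist (v j) Cstar ≤ rstar := Metric.mem_closedBall.mp (hball j hj)
    have h2 := dist_triangle (v s) Cstar (v j)
    rw [dist_comm Cstar (v j)] at h2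
    linarith
  -- upper bound on the complement part of s's sum
  have key3 : ∑ j ∈ Hᶜ, dist (v s) (v j)
      ≤ (∑ j ∈ Hᶜ, dist (v i₀) (v j)) + Hᶜ.card • (rstar + D) := by
    have : ∑ j ∈ Hᶜ, dist (v s) (v j)
        ≤ ∑ j ∈ Hᶜ, (dist (v i₀) (v j) + (rstar + D)) := by
      refine Finset.sum_le_sum (fun j _ => ?_)
      have h2 := dist_triangle (v s) (v i₀) (v j)
      have h3 := dist_triangle (v s) Cstar (v i₀)
      rw [dist_comm Cstar (v i₀)] at h3
      simp only [hDdef] at *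
      linarith
    simpa [Finset.sum_add_distrib] using this
  have hsplit1 := Finset.sum_add_sum_compl H (fun j => dist (v i₀) (v j))
  have hsplit2 := Finset.sum_add_sum_compl H (fun j => dist (v s) (v j))
  have hms := hmed s
  -- main scalar inequality
  have hcompl : (Hᶜ.card : ℝ) = (n : ℝ) - H.card := by
    have h1 : Hᶜ.card = n - H.card := by
      simp [Finset.card_compl]
    have h2 : H.card ≤ n := by
      simpa using H.card_le_univ
    rw [h1, Nat.cast_sub h2]
  have hh1 : (n : ℝ) - t ≤ (H.card : ℝ) := by
    have : ((n - t : ℕ) : ℝ) ≤ (H.card : ℝ) := Nat.cast_le.mpr hH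
    rwa [Nat.cast_sub ht_le] at this
  have hh2 : (H.card : ℝ) ≤ n := by
    exact_mod_cast by simpa using H.card_le_univ
  have hmain : (H.card : ℝ) * (D - rstar)
      ≤ (H.card : ℝ) * (2 * rstar) + ((n : ℝ) - H.card) * (rstar + D) := by
    have e1 : (H.card : ℝ) * (D - rstar)
        + ∑ j ∈ Hᶜ, dist (v i₀) (v j) ≤ ∑ j, dist (v i₀) (v j) := by
      rw [← hsplit1]
      have := key1
      rw [nsmul_eq_mul] at this
      linarith
    have e2 : ∑ j, dist (v s) (v j)
        ≤ (H.card : ℝ) * (2 * rstar) + ((∑ j ∈ Hᶜ, dist (v i₀) (v j))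
          + ((n : ℝ) - H.card) * (rstar + D)) := by
      rw [← hsplit2]
      have h3 := key3
      rw [nsmul_eq_mul, hcompl] at h3
      have h2 := key2
      rw [nsmul_eq_mul] at h2
      linarith
    linarith
  have hpos : (0 : ℝ) < (n : ℝ) - 2 * t := by
    have : (2 * t : ℕ) < n := hn
    have : ((2 * t : ℕ) : ℝ) < n := Nat.cast_lt.mpr this
    push_cast at this
    linarith
  rw [div_mul_eq_mul_div, le_div_iff₀ hpos]
  nlinarith [mul_le_mul_of_nonneg_right hmain hpos.le,
    mul_nonneg hr (by linarith : (0:ℝ) ≤ (H.card : ℝ) - ((n:ℝ) - t)),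
    mul_nonneg hD0 (by linarith : (0:ℝ) ≤ (H.card : ℝ) - ((n:ℝ) - t)),
    mul_nonneg hr hD0, mul_nonneg (le_trans (by linarith) hh1) hr]
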